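/- For the spline kernel K(u) = exp(-|u|)/2, the asymptotic variance constant of the local linear density estimator at the right boundary, V_{1,K} = e_1' A_{1,K}^{-1} B_{1,K} A_{1,K}^{-1} e_1 with e_1 = (0,1)', equals 1/4, where B_{1,K} = ∫_{-∞}^0 ∫_{-∞}^0 min{u,v} r_1(u) r_1(v)' K(u) K(v) du dv. -/

import Mathlib

open MeasureTheory Matrix
open Set Filter Real

lemma tendsto_pme (c : ℝ) (hc : 0 < c) (n : ℕ) :
    Tendsto (fun x : ℝ => x ^ n * Real.exp (-(c * x))) atTop (nhds 0) := by
  have h := tendsto_pow_mul_exp_neg_atTop_nhds_zero n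
  have h2 : Tendsto (fun x : ℝ => c * x) atTop atTop := tendsto_id.const_mul_atTop hc
  have h3 := (h.comp h2).const_mul (1 / c ^ n)
  rw [mul_zero] at h3
  refine h3.congr fun x => ?_
  have hcn : (c : ℝ) ^ n ≠ 0 := pow_ne_zero _ hc.ne'
  field_simp [Function.comp]
  simp only [Function.comp_apply]
  ring

lemma tendsto_pme_bot (c : ℝ) (hc : 0 < c) (n : ℕ) :
    Tendsto (fun x : ℝ => x ^ n * Real.exp (c * x)) atBot (nhds 0) := by
  have h := (tendsto_pme c hc n).comp tendsto_neg_atBot_atTop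
  have h2 := h.const_mul ((-1 : ℝ) ^ n)
  rw [mul_zero] at h2
  refine h2.congr fun x => ?_
  simp only [Function.comp]
  rw [show -(c * -x) = c * x by ring, ← mul_assoc, ← mul_pow, neg_one_mul, neg_neg]

lemma integrableOn_pme (c : ℝ) (hc : 0 < c) (n : ℕ) :
    IntegrableOn (fun x : ℝ => x ^ n * Real.exp (c * x)) (Set.Iic (0:ℝ)) := by
  rw [← (Measure.measurePreserving_neg (volume : Measure ℝ)).integrableOn_comp_preimage
      (Homeomorph.neg ℝ).measurableEmbedding]
  simp only [Function.comp_def, neg_preimage, neg_Iic, neg_zero]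
  rw [integrableOn_Ici_iff_integrableOn_Ioi]
  apply integrable_of_isBigO_exp_neg (half_pos hc)
  · exact ((continuous_neg.pow n).mul ((continuous_const.mul continuous_neg).rexp)).continuousOn
  · apply Asymptotics.IsLittleO.isBigO
    rw [Asymptotics.isLittleO_iff_tendsto' ]
    · have h := (tendsto_pme (c/2) (half_pos hc) n).const_mul ((-1:ℝ)^n)
      rw [mul_zero] at h
      refine h.congr' ?_
      filter_upwards [eventually_ge_atTop (0:ℝ)] with x _
      rw [eq_div_iff (exp_ne_zero _), show c * -x = -(c/2*x) + -(c/2) * x by ring,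
        Real.exp_add]
      ring
    · filter_upwards with x hx
      exact absurd hx (exp_ne_zero _)

lemma I_exp (c : ℝ) (hc : 0 < c) (n : ℕ) :
    ∫ x in Set.Iio (0:ℝ), x ^ n * Real.exp (c * x)
      = (-1)^n * (n.factorial : ℝ) / c^(n+1) := by
  rw [← MeasureTheory.integral_Iic_eq_integral_Iio]
  induction n with
  | zero =>
      have hd : ∀ x ∈ Iic (0:ℝ), HasDerivAt (fun x : ℝ => Real.exp (c*x) / c)
          ((fun x : ℝ => x ^ 0 * Real.exp (c * x)) x) x := by
        intro x _
        have h := (((hasDerivAt_id x).const_mul c).exp).div_const c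
        simpa [mul_div_assoc, div_self hc.ne'] using h
      have ht : Tendsto (fun x : ℝ => Real.exp (c*x) / c) atBot (nhds 0) := by
        have := (tendsto_pme_bot c hc 0).div_const c
        simpa using this
      rw [integral_Iic_of_hasDerivAt_of_tendsto' hd (integrableOn_pme c hc 0) ht]
      simp
  | succ n ih =>
      have hd : ∀ x ∈ Iic (0:ℝ), HasDerivAt (fun x : ℝ => x^(n+1) * Real.exp (c*x) / c)
          (x ^ (n+1) * Real.exp (c * x) + ((n:ℝ)+1)/c * (x ^ n * Real.exp (c * x))) x := by
        intro x _
        have h := ((hasDerivAt_pow (n+1) x).mul ((hasDerivAt_id x).const_mul c).exp).div_const c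
        refine h.congr_deriv ?_
        simp only [id_eq]
        push_cast
        field_simp
        ring
      have hint : IntegrableOn (fun x : ℝ =>
          x ^ (n+1) * Real.exp (c * x) + ((n:ℝ)+1)/c * (x ^ n * Real.exp (c * x))) (Iic 0) :=
        (integrableOn_pme c hc (n+1)).add ((integrableOn_pme c hc n).const_mul _)
      have ht : Tendsto (fun x : ℝ => x^(n+1) * Real.exp (c*x) / c) atBot (nhds 0) := by
        have := (tendsto_pme_bot c hc (n+1)).div_const c
        simpa using this
      have key := integral_Iic_of_hasDerivAt_of_tendsto' hd hint ht
      rw [MeasureTheory.integral_add (integrableOn_pme c hc (n+1))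
        ((integrableOn_pme c hc n).const_mul _), MeasureTheory.integral_const_mul, ih] at key
      simp only [zero_pow (Nat.succ_ne_zero n), zero_mul, zero_div, Nat.factorial_succ] at key ⊢
      have hcp : (c:ℝ)^(n+1) ≠ 0 := pow_ne_zero _ hc.ne'
      have hcp2 : (c:ℝ)^(n+2) ≠ 0 := pow_ne_zero _ hc.ne'
      field_simp at key ⊢
      push_cast at key ⊢
      linear_combination key

lemma J1 (a : ℝ) (ha : a ≤ 0) :
    ∫ v in Set.Iio a, v * Real.exp v = Real.exp a * (a - 1) := by
  rw [← MeasureTheory.integral_Iic_eq_integral_Iio]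
  have hd : ∀ x ∈ Iic a, HasDerivAt (fun x : ℝ => (x - 1) * Real.exp x)
      (x * Real.exp x) x := by
    intro x _
    have h := (((hasDerivAt_id x).sub_const 1).mul (Real.hasDerivAt_exp x))
    refine h.congr_deriv ?_
    simp only [id_eq]
    ring
  have hint : IntegrableOn (fun x : ℝ => x * Real.exp x) (Iic a) := by
    have := (integrableOn_pme 1 one_pos 1).mono_set (Iic_subset_Iic.2 ha)
    simpa using this
  have ht : Tendsto (fun x : ℝ => (x - 1) * Real.exp x) atBot (nhds 0) := by
    have h1 := tendsto_pme_bot 1 one_pos 1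
    have h0 := tendsto_pme_bot 1 one_pos 0
    have := h1.sub h0
    simpa [sub_mul] using this
  rw [integral_Iic_of_hasDerivAt_of_tendsto' hd hint ht]
  ring

lemma J2 (a : ℝ) (ha : a ≤ 0) :
    ∫ v in Set.Iio a, v^2 * Real.exp v = Real.exp a * (a^2 - 2*a + 2) := by
  rw [← MeasureTheory.integral_Iic_eq_integral_Iio]
  have hd : ∀ x ∈ Iic a, HasDerivAt (fun x : ℝ => (x^2 - 2*x + 2) * Real.exp x)
      (x^2 * Real.exp x) x := by
    intro x _
    have h1 : HasDerivAt (fun x : ℝ => x^2 - 2*x + 2) (2*x - 2) x := by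
      have := (((hasDerivAt_pow 2 x).sub ((hasDerivAt_id x).const_mul 2)).add_const 2)
      refine this.congr_deriv ?_
      simp [id_eq]
    have h := h1.mul (Real.hasDerivAt_exp x)
    refine h.congr_deriv ?_
    ring
  have hint : IntegrableOn (fun x : ℝ => x^2 * Real.exp x) (Iic a) := by
    have := (integrableOn_pme 1 one_pos 2).mono_set (Iic_subset_Iic.2 ha)
    simpa using this
  have ht : Tendsto (fun x : ℝ => (x^2 - 2*x + 2) * Real.exp x) atBot (nhds 0) := by
    have h2 := tendsto_pme_bot 1 one_pos 2
    have h1 := (tendsto_pme_bot 1 one_pos 1).const_mul (2:ℝ)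
    have h0 := (tendsto_pme_bot 1 one_pos 0).const_mul (2:ℝ)
    have := (h2.sub h1).add h0
    simp only [one_mul, mul_zero, sub_zero, add_zero, zero_sub, neg_zero] at h2 h1 h0 ⊢
    have h := (h2.sub h1).add h0
    simp only [mul_zero, sub_zero, add_zero] at h
    refine h.congr fun x => ?_
    simp; ring
  rw [integral_Iic_of_hasDerivAt_of_tendsto' hd hint ht]
  ring

lemma J3 (u : ℝ) (hu : u ≤ 0) :
    ∫ v in Set.Ico u (0:ℝ), Real.exp v = 1 - Real.exp u := by
  rw [MeasureTheory.integral_Ico_eq_integral_Ioo,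
    ← MeasureTheory.integral_Ioc_eq_integral_Ioo,
    ← intervalIntegral.integral_of_le hu, integral_exp]
  simp

lemma J4 (u : ℝ) (hu : u ≤ 0) :
    ∫ v in Set.Ico u (0:ℝ), v * Real.exp v = -1 - (u - 1) * Real.exp u := by
  rw [MeasureTheory.integral_Ico_eq_integral_Ioo,
    ← MeasureTheory.integral_Ioc_eq_integral_Ioo,
    ← intervalIntegral.integral_of_le hu]
  have hd : ∀ x ∈ Set.uIcc u 0, HasDerivAt (fun x : ℝ => (x - 1) * Real.exp x)
      (x * Real.exp x) x := by
    intro x _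
    have h := (((hasDerivAt_id x).sub_const 1).mul (Real.hasDerivAt_exp x))
    refine h.congr_deriv ?_
    simp only [id_eq]
    ring
  rw [intervalIntegral.integral_eq_sub_of_hasDerivAt hd
    ((continuous_id.mul Real.continuous_exp).intervalIntegrable u 0)]
  simp

lemma Minner (u : ℝ) (hu : u < 0) (j : ℕ) :
    ∫ v in Set.Iio (0:ℝ), min u v * v ^ j * (Real.exp (-|v|) / 2)
      = (∫ v in Set.Iio u, v ^ (j+1) * Real.exp v) / 2
        + u / 2 * ∫ v in Set.Ico u 0, v ^ j * Real.exp v := by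
  have h1 : ∫ v in Set.Iio (0:ℝ), min u v * v ^ j * (Real.exp (-|v|) / 2)
      = ∫ v in Set.Iio (0:ℝ), min u v * v ^ j * Real.exp v / 2 := by
    refine setIntegral_congr_fun measurableSet_Iio fun v hv => ?_
    rw [abs_of_neg hv, neg_neg]
    ring
  have hdisj : Disjoint (Set.Iio u) (Set.Ico u 0) :=
    (Set.Iio_disjoint_Ici le_rfl).mono_right Set.Ico_subset_Ici_self
  have hsub : Set.Iio u ⊆ Set.Iic (0:ℝ) :=
    Set.Iio_subset_Iic_self.trans (Set.Iic_subset_Iic.2 hu.le)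
  have hG : IntegrableOn (fun v : ℝ => v ^ (j+1) * Real.exp v / 2) (Set.Iio u) := by
    have := ((integrableOn_pme 1 one_pos (j+1)).mono_set hsub).div_const 2
    simp at this
    exact this
  have heq1 : Set.EqOn (fun v : ℝ => v ^ (j+1) * Real.exp v / 2)
      (fun v : ℝ => min u v * v ^ j * Real.exp v / 2) (Set.Iio u) := by
    intro v hv
    simp only
    rw [min_eq_right (le_of_lt hv), pow_succ]
    ring
  have hF1 : IntegrableOn (fun v : ℝ => min u v * v ^ j * Real.exp v / 2) (Set.Iio u) :=
    hG.congr_fun heq1 measurableSet_Iio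
  have hF2 : IntegrableOn (fun v : ℝ => min u v * v ^ j * Real.exp v / 2) (Set.Ico u 0) := by
    have hcont : Continuous (fun v : ℝ => min u v * v ^ j * Real.exp v / 2) :=
      (((continuous_const.min continuous_id).mul (continuous_pow j)).mul
        Real.continuous_exp).div_const 2
    exact hcont.integrableOn_Icc.mono_set Set.Ico_subset_Icc_self
  rw [h1, ← Set.Iio_union_Ico_eq_Iio hu.le (b := (0:ℝ)),
    setIntegral_union hdisj measurableSet_Ico hF1 hF2]
  congr 1
  · rw [← setIntegral_congr_fun measurableSet_Iio heq1, ← integral_div]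
  · have heq2 : Set.EqOn (fun v : ℝ => min u v * v ^ j * Real.exp v / 2)
        (fun v : ℝ => u / 2 * (v ^ j * Real.exp v)) (Set.Ico u 0) := by
      intro v hv
      simp only
      rw [min_eq_left hv.1]
      ring
    rw [setIntegral_congr_fun measurableSet_Ico heq2, MeasureTheory.integral_const_mul]

lemma inner0 (u : ℝ) (hu : u < 0) :
    ∫ v in Set.Iio (0:ℝ), min u v * v ^ (0:ℕ) * (Real.exp (-|v|) / 2)
      = (u - Real.exp u) / 2 := by
  rw [Minner u hu 0]
  have h1 : (0:ℕ) + 1 = 1 := rfl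
  rw [h1]
  have hJ1 : ∫ v in Set.Iio u, v ^ (1:ℕ) * Real.exp v = Real.exp u * (u - 1) := by
    rw [← J1 u hu.le]
    congr 1
    funext v
    rw [pow_one]
  have hJ3 : ∫ v in Set.Ico u (0:ℝ), v ^ (0:ℕ) * Real.exp v = 1 - Real.exp u := by
    rw [← J3 u hu.le]
    congr 1
    funext v
    rw [pow_zero, one_mul]
  rw [hJ1, hJ3]
  ring

lemma inner1 (u : ℝ) (hu : u < 0) :
    ∫ v in Set.Iio (0:ℝ), min u v * v ^ (1:ℕ) * (Real.exp (-|v|) / 2)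
      = ((2 - u) * Real.exp u - u) / 2 := by
  rw [Minner u hu 1]
  have hJ2 : ∫ v in Set.Iio u, v ^ (1+1:ℕ) * Real.exp v
      = Real.exp u * (u^2 - 2*u + 2) := by
    rw [← J2 u hu.le]
  have hJ4 : ∫ v in Set.Ico u (0:ℝ), v ^ (1:ℕ) * Real.exp v
      = -1 - (u - 1) * Real.exp u := by
    rw [← J4 u hu.le]
    congr 1
    funext v
    rw [pow_one]
  rw [hJ2, hJ4]
  ring

lemma I_exp1 (n : ℕ) : ∫ x in Set.Iio (0:ℝ), x ^ n * Real.exp x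
    = (-1)^n * (n.factorial : ℝ) := by
  have h := I_exp 1 one_pos n
  simpa using h

lemma I_exp2 (n : ℕ) : ∫ x in Set.Iio (0:ℝ), x ^ n * Real.exp (2*x)
    = (-1)^n * (n.factorial : ℝ) / 2^(n+1) :=
  I_exp 2 two_pos n

lemma int1 (n : ℕ) : IntegrableOn (fun x : ℝ => x ^ n * Real.exp x) (Set.Iio (0:ℝ)) := by
  have := (integrableOn_pme 1 one_pos n).mono_set Set.Iio_subset_Iic_self
  simpa using this

lemma int2 (n : ℕ) : IntegrableOn (fun x : ℝ => x ^ n * Real.exp (2*x)) (Set.Iio (0:ℝ)) :=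
  (integrableOn_pme 2 two_pos n).mono_set Set.Iio_subset_Iic_self

lemma Aval (n : ℕ) : ∫ u in Set.Iio (0:ℝ), u ^ n * (Real.exp (-|u|)/2)
    = (-1)^n * (n.factorial : ℝ) / 2 := by
  have h : ∫ u in Set.Iio (0:ℝ), u ^ n * (Real.exp (-|u|)/2)
      = ∫ u in Set.Iio (0:ℝ), u ^ n * Real.exp u / 2 := by
    refine setIntegral_congr_fun measurableSet_Iio fun u hu => ?_
    rw [abs_of_neg hu, neg_neg]
    ring
  rw [h, integral_div, I_exp1]

lemma Bj0 (i : ℕ) : (∫ u in Set.Iio (0:ℝ), ∫ v in Set.Iio (0:ℝ),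
    min u v * u ^ i * v ^ (0:ℕ) * (Real.exp (-|u|)/2) * (Real.exp (-|v|)/2))
    = ((-1)^(i+1) * ((i+1).factorial : ℝ)
        - (-1)^i * (i.factorial : ℝ) / 2^(i+1)) / 4 := by
  have hout : Set.EqOn (fun u : ℝ => ∫ v in Set.Iio (0:ℝ),
      min u v * u ^ i * v ^ (0:ℕ) * (Real.exp (-|u|)/2) * (Real.exp (-|v|)/2))
      (fun u : ℝ => u ^ (i+1) * Real.exp u / 4 - u ^ i * Real.exp (2*u) / 4)
      (Set.Iio 0) := by
    intro u hu
    simp only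
    have hpull : (fun v : ℝ =>
        min u v * u ^ i * v ^ (0:ℕ) * (Real.exp (-|u|)/2) * (Real.exp (-|v|)/2))
        = fun v : ℝ => (u ^ i * (Real.exp (-|u|)/2))
            * (min u v * v ^ (0:ℕ) * (Real.exp (-|v|)/2)) := by
      funext v; ring
    rw [hpull, MeasureTheory.integral_const_mul, inner0 u hu, abs_of_neg hu, neg_neg,
      show (2:ℝ)*u = u + u by ring, Real.exp_add, pow_succ]
    ring
  rw [setIntegral_congr_fun measurableSet_Iio hout,
    integral_sub ((int1 (i+1)).div_const 4) ((int2 i).div_const 4),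
    integral_div, integral_div, I_exp1, I_exp2]
  ring

lemma Bj1 (i : ℕ) : (∫ u in Set.Iio (0:ℝ), ∫ v in Set.Iio (0:ℝ),
    min u v * u ^ i * v ^ (1:ℕ) * (Real.exp (-|u|)/2) * (Real.exp (-|v|)/2))
    = 2/4 * ((-1)^i * (i.factorial : ℝ) / 2^(i+1))
      - 1/4 * ((-1)^(i+1) * ((i+1).factorial : ℝ) / 2^(i+2))
      - 1/4 * ((-1)^(i+1) * ((i+1).factorial : ℝ)) := by
  have hout : Set.EqOn (fun u : ℝ => ∫ v in Set.Iio (0:ℝ),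
      min u v * u ^ i * v ^ (1:ℕ) * (Real.exp (-|u|)/2) * (Real.exp (-|v|)/2))
      (fun u : ℝ => 2/4 * (u ^ i * Real.exp (2*u))
        - (1/4) * (u ^ (i+1) * Real.exp (2*u)) - (1/4) * (u ^ (i+1) * Real.exp u))
      (Set.Iio 0) := by
    intro u hu
    simp only
    have hpull : (fun v : ℝ =>
        min u v * u ^ i * v ^ (1:ℕ) * (Real.exp (-|u|)/2) * (Real.exp (-|v|)/2))
        = fun v : ℝ => (u ^ i * (Real.exp (-|u|)/2))
            * (min u v * v ^ (1:ℕ) * (Real.exp (-|v|)/2)) := by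
      funext v; ring
    rw [hpull, MeasureTheory.integral_const_mul, inner1 u hu, abs_of_neg hu, neg_neg,
      show (2:ℝ)*u = u + u by ring, Real.exp_add, pow_succ]
    ring
  have h1 : IntegrableOn (fun x : ℝ => 2/4 * (x ^ i * Real.exp (2*x))) (Set.Iio 0) :=
    (int2 i).const_mul _
  have h2 : IntegrableOn (fun x : ℝ => 1/4 * (x ^ (i+1) * Real.exp (2*x))) (Set.Iio 0) :=
    (int2 (i+1)).const_mul _
  have h3 : IntegrableOn (fun x : ℝ => 1/4 * (x ^ (i+1) * Real.exp x)) (Set.Iio 0) :=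
    (int1 (i+1)).const_mul _
  have h12 : IntegrableOn (fun x : ℝ => 2/4 * (x ^ i * Real.exp (2*x))
      - 1/4 * (x ^ (i+1) * Real.exp (2*x))) (Set.Iio 0) := h1.sub h2
  rw [setIntegral_congr_fun measurableSet_Iio hout,
    integral_sub h12 h3, integral_sub h1 h2,
    MeasureTheory.integral_const_mul, MeasureTheory.integral_const_mul,
    MeasureTheory.integral_const_mul, I_exp1, I_exp2, I_exp2]

/-- For the spline kernel `K u = exp (-|u|)/2`, the asymptotic variance constant
`V_{1,K} = e₁' A_{1,K}⁻¹ B_{1,K} A_{1,K}⁻¹ e₁` of the local linear density estimator at the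
right boundary equals `1/4`. -/
theorem spline_variance_constant :
    let K : ℝ → ℝ := fun u => Real.exp (-|u|) / 2
    let A : Matrix (Fin 2) (Fin 2) ℝ :=
      Matrix.of fun i j => ∫ u in Set.Iio (0 : ℝ), u ^ ((i : ℕ) + (j : ℕ)) * K u
    let B : Matrix (Fin 2) (Fin 2) ℝ :=
      Matrix.of fun i j => ∫ u in Set.Iio (0 : ℝ), ∫ v in Set.Iio (0 : ℝ),
        min u v * u ^ (i : ℕ) * v ^ (j : ℕ) * K u * K v
    let e1 : Fin 2 → ℝ := ![0, 1]
    e1 ⬝ᵥ ((A⁻¹ * B * A⁻¹) *ᵥ e1) = 1/4 := by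
  intro K A B e1
  have hA : A = !![1/2, -1/2; -1/2, 1] := by
    ext i j
    fin_cases i <;> fin_cases j <;>
      simp only [A, K, Matrix.of_apply, Matrix.cons_val', Matrix.cons_val_zero,
        Matrix.cons_val_one, Matrix.head_cons, Matrix.empty_val',
        Matrix.cons_val_fin_one, Fin.isValue] <;>
      rw [Aval] <;> norm_num
  have hB : B = !![-3/8, 9/16; 9/16, -11/16] := by
    ext i j
    fin_cases i <;> fin_cases j <;>
      simp only [B, K, Matrix.of_apply, Matrix.cons_val', Matrix.cons_val_zero,
        Matrix.cons_val_one, Matrix.head_cons, Matrix.empty_val',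
        Matrix.cons_val_fin_one, Fin.isValue, Fin.mk_zero, Fin.mk_one,
        Fin.val_zero, Fin.val_one, Matrix.head_fin_const]
    · rw [Bj0 0]; norm_num
    · rw [Bj1 0]; norm_num
    · rw [Bj0 1]; norm_num [Nat.factorial]
    · rw [Bj1 1]; norm_num [Nat.factorial]
  have hAinv : (!![1/2, -1/2; -1/2, 1] : Matrix (Fin 2) (Fin 2) ℝ)⁻¹ = !![4, 2; 2, 2] := by
    apply Matrix.inv_eq_right_inv
    norm_num [Matrix.mul_fin_two]
    exact Matrix.one_fin_two.symm
  rw [hA, hB, hAinv]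
  norm_num [Matrix.mul_fin_two, Matrix.mulVec, dotProduct, Fin.sum_univ_two, e1]
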